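/- For every real k ≠ 0, one has ξ(k) − ω(k)⁴ ≠ 0, and there exists a continuously differentiable function ψ : ℝ → ℂ that is twice differentiable at every x ∉ {−b, 0} and satisfies −ψ''(x) + V(x)ψ(x) = k²ψ(x) for all x ∉ {−b, 0}, together with ψ(x) = e^{ikx} + L(k)e^{−ikx} for all x ≤ −b and ψ(x) = T(k)e^{ikx} for all x ≥ 0. (This exhibits L(k) and T(k) as the left reflection and transmission coefficients of the block potential V.) -/

import Mathlib

open Complex

/-- `ω(k) = k/a + ((k/a)² + 1)^{1/2}` with the principal branch of the square root. -/
noncomputable def omg (a : ℝ) (k : ℂ) : ℂ :=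
  k / (a : ℂ) + ((k / (a : ℂ)) ^ 2 + 1) ^ ((1 : ℂ) / 2)

/-- `ξ(k) = exp(i·a·b·(ω(k) + 1/ω(k)))`. -/
noncomputable def xi (a b : ℝ) (k : ℂ) : ℂ :=
  Complex.exp (Complex.I * (a : ℂ) * (b : ℂ) * (omg a k + 1 / omg a k))

/-- Right reflection coefficient of the block potential `−a²·χ_{[−b,0]}`. -/
noncomputable def Rcoef (a b : ℝ) (k : ℂ) : ℂ :=
  omg a k ^ 2 * (1 - xi a b k) / (xi a b k - omg a k ^ 4)

/-- Left reflection coefficient of the block potential `−a²·χ_{[−b,0]}`. -/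
noncomputable def Lcoef (a b : ℝ) (k : ℂ) : ℂ :=
  Rcoef a b k * Complex.exp (-Complex.I * (a : ℂ) * (b : ℂ) * (omg a k - 1 / omg a k))

/-- Transmission coefficient of the block potential `−a²·χ_{[−b,0]}`. -/
noncomputable def Tcoef (a b : ℝ) (k : ℂ) : ℂ :=
  (1 - omg a k ^ 4) / (xi a b k - omg a k ^ 4) * Complex.exp (Complex.I * (a : ℂ) * (b : ℂ) / omg a k)

/-- The block (well) potential `V = −a²·χ_{[−b,0]}`, complex-valued. -/
noncomputable def Vblock (a b : ℝ) (x : ℝ) : ℂ :=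
  if -b ≤ x ∧ x ≤ 0 then -(a : ℂ) ^ 2 else 0

/-- Elementary plane-wave combination `c₁ e^{iμx} + c₂ e^{-iμx}`. -/
noncomputable def wv (c₁ c₂ μ : ℂ) (x : ℝ) : ℂ :=
  c₁ * Complex.exp (Complex.I * μ * x) + c₂ * Complex.exp (-(Complex.I * μ * x))

lemma hasDerivAt_wv (c₁ c₂ μ : ℂ) (x : ℝ) :
    HasDerivAt (wv c₁ c₂ μ) (wv (Complex.I*μ*c₁) (-(Complex.I*μ*c₂)) μ x) x := by
  have hlin : HasDerivAt (fun y : ℝ => Complex.I * μ * (y : ℂ)) (Complex.I * μ) x := by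
    simpa using ((hasDerivAt_id x).ofReal_comp.const_mul (Complex.I * μ))
  have h := ((hlin.cexp.const_mul c₁).add (hlin.neg.cexp.const_mul c₂))
  convert h using 1 <;> first | rfl | (funext y; simp [wv]) | (simp only [wv, Pi.neg_apply]; ring)

lemma wv_continuous (c₁ c₂ μ : ℂ) : Continuous (wv c₁ c₂ μ) :=
  Differentiable.continuous (fun x => (hasDerivAt_wv c₁ c₂ μ x).differentiableAt)

lemma pw_hasDerivAt {c : ℝ} {f g f' g' : ℝ → ℂ}
    (hf : ∀ x, HasDerivAt f (f' x) x) (hg : ∀ x, HasDerivAt g (g' x) x)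
    (hval : f c = g c) (hder : f' c = g' c) (x : ℝ) :
    HasDerivAt (fun y => if y ≤ c then f y else g y)
      (if x ≤ c then f' x else g' x) x := by
  rcases lt_trichotomy x c with h | h | h
  · rw [if_pos h.le]
    apply (hf x).congr_of_eventuallyEq
    filter_upwards [Iio_mem_nhds h] with y hy
    rw [if_pos (le_of_lt (Set.mem_Iio.mp hy))]
  · subst h
    rw [if_pos le_rfl]
    have h1 : HasDerivWithinAt (fun y => if y ≤ x then f y else g y) (f' x) (Set.Iic x) x := by
      apply (hf x).hasDerivWithinAt.congr
      · intro y hy; rw [if_pos (Set.mem_Iic.mp hy)]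
      · rw [if_pos le_rfl]
    have h2 : HasDerivWithinAt (fun y => if y ≤ x then f y else g y) (f' x) (Set.Ici x) x := by
      rw [hder]
      apply (hg x).hasDerivWithinAt.congr
      · intro y hy
        rcases eq_or_lt_of_le (Set.mem_Ici.mp hy) with h' | h'
        · rw [← h', if_pos le_rfl]; exact hval
        · rw [if_neg (not_le.mpr h')]
      · rw [if_pos le_rfl]; exact hval
    have h3 := h1.union h2
    rw [Set.Iic_union_Ici] at h3
    exact h3.hasDerivAt (by simp)
  · rw [if_neg (not_le.mpr h)]
    apply (hg x).congr_of_eventuallyEq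
    filter_upwards [Ioi_mem_nhds h] with y hy
    rw [if_neg (not_le.mpr (Set.mem_Ioi.mp hy))]

lemma match_alg (aC w E F G Ei kC KC T L A B : ℂ)
    (hs0 : w^2+1 ≠ 0)
    (hΔ1 : (E^2-w^4)*F*E*(w^2+1) ≠ 0)
    (hΔ2 : (E^2-w^4)*F*E*(w^2+1)*(2*w) ≠ 0)
    (hΔ4 : (w^2+1)*(2*w) ≠ 0)
    (r1 : F*G = 1) (r2 : E*Ei = 1)
    (rT : T*((E^2-w^4)*F) = (1-w^4)*E)
    (rL : L*((E^2-w^4)*F^2) = w^2*(1-E^2))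
    (rA : A*(w^2+1) = T*w^2) (rB : B*(w^2+1) = T)
    (rk : kC*(2*w) = aC*(w^2-1)) (rK : KC*(2*w) = aC*(w^2+1)) :
    (1*G + L*F = A*Ei + B*E) ∧
    (Complex.I*kC*1*G + (-(Complex.I*kC*L))*F
      = Complex.I*KC*A*Ei + (-(Complex.I*KC*B))*E) ∧
    (A + B = T) ∧
    (Complex.I*KC*A + (-(Complex.I*KC*B)) = Complex.I*kC*T) := by
  refine ⟨?_, ?_, ?_, ?_⟩
  · apply mul_right_cancel₀ hΔ1
    linear_combination ((E^2-w^4)*E*(w^2+1))*r1 + (E*(w^2+1))*rL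
      - ((E^2-w^4)*F*E*Ei)*rA - (T*w^2*(E^2-w^4)*F)*r2
      - (w^2+E^2)*rT - ((E^2-w^4)*F*E^2)*rB
  · apply mul_right_cancel₀ hΔ2
    linear_combination (Complex.I*kC*2*w*(E^2-w^4)*E*(w^2+1))*r1
      + (Complex.I*(E^2-w^4)*E*(w^2+1) - Complex.I*w^2*(1-E^2)*E*(w^2+1))*rk
      - (Complex.I*kC*2*w*E*(w^2+1))*rL
      - (Complex.I*KC*2*w*E*Ei*(E^2-w^4)*F)*rA
      - (Complex.I*KC*2*w*T*w^2*(E^2-w^4)*F)*r2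
      + (Complex.I*KC*2*w*(E^2-w^2))*rT
      + (Complex.I*(1-w^4)*E*(E^2-w^2))*rK
      + (Complex.I*KC*2*w*(E^2-w^4)*F*E^2)*rB
  · apply mul_right_cancel₀ hs0
    linear_combination rA + rB
  · apply mul_right_cancel₀ hΔ4
    linear_combination (Complex.I*2*w*KC)*rA - (Complex.I*2*w*KC)*rB
      + (Complex.I*T*(w^2-1))*rK - (Complex.I*T*(w^2+1))*rk

/-- For real `k ≠ 0`, `ξ(k) − ω(k)⁴ ≠ 0`, and the block potential has a left Jost
solution exhibiting `L(k)` and `T(k)` as the left reflection and transmission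
coefficients. -/
theorem block_left_jost (a b : ℝ) (ha : 0 < a) (hb : 0 < b) (k : ℝ) (hk : k ≠ 0) :
    xi a b (k : ℂ) - omg a (k : ℂ) ^ 4 ≠ 0 ∧
    ∃ ψ : ℝ → ℂ, ContDiff ℝ 1 ψ ∧
      (∀ x : ℝ, x ∉ ({-b, 0} : Set ℝ) → DifferentiableAt ℝ (deriv ψ) x) ∧
      (∀ x : ℝ, x ∉ ({-b, 0} : Set ℝ) →
        -(deriv (deriv ψ) x) + Vblock a b x * ψ x = (k : ℂ) ^ 2 * ψ x) ∧
      (∀ x : ℝ, x ≤ -b →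
        ψ x = Complex.exp (Complex.I * (k : ℂ) * (x : ℂ)) +
          Lcoef a b (k : ℂ) * Complex.exp (-Complex.I * (k : ℂ) * (x : ℂ))) ∧
      (∀ x : ℝ, 0 ≤ x →
        ψ x = Tcoef a b (k : ℂ) * Complex.exp (Complex.I * (k : ℂ) * (x : ℂ))) := by
  have ha0 : (a : ℂ) ≠ 0 := ofReal_ne_zero.mpr (ne_of_gt ha)
  set Kr : ℝ := Real.sqrt (k^2 + a^2) with hKr
  have hKr2 : Kr^2 = k^2 + a^2 := Real.sq_sqrt (by positivity)
  have hKrpos : 0 < Kr := Real.sqrt_pos.mpr (by positivity)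
  have hkK : 0 < k + Kr := by nlinarith [hKr2, hKrpos, mul_pos ha ha]
  have hkK0 : ((k:ℂ) + (Kr:ℂ)) ≠ 0 := by
    rw [show ((k:ℂ) + (Kr:ℂ)) = ((k + Kr : ℝ) : ℂ) by push_cast; ring]
    exact ofReal_ne_zero.mpr (ne_of_gt hkK)
  have hKc2 : ((Kr:ℝ):ℂ)^2 = (k:ℂ)^2 + (a:ℂ)^2 := by
    have := congrArg (fun t : ℝ => (t : ℂ)) hKr2
    push_cast at this
    exact this
  set Wr : ℝ := (k + Kr)/a with hWr
  have hWpos : 0 < Wr := div_pos hkK ha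
  have hWc : ((Wr:ℝ):ℂ) = ((k:ℂ) + (Kr:ℂ))/(a:ℂ) := by rw [hWr]; push_cast; ring
  -- the value of ω(k) is the positive real Wr
  have h_omg : omg a (k : ℂ) = ((Wr : ℝ) : ℂ) := by
    unfold omg
    have h1 : ((k:ℂ)/(a:ℂ))^2 + 1 = ((((k/a)^2 + 1 : ℝ)) : ℂ) := by push_cast; ring
    have h2 : ((k/a)^2 + 1 : ℝ) = (Kr/a)^2 := by
      field_simp
      linarith [hKr2]
    have h3 : ((((k/a)^2 + 1 : ℝ)) : ℂ) ^ ((1:ℂ)/2) = ((Kr/a : ℝ) : ℂ) := by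
      rw [show ((1:ℂ)/2) = (((1/2 : ℝ)) : ℂ) by norm_num,
        ← Complex.ofReal_cpow (by positivity) (1/2 : ℝ)]
      rw [show ((k/a)^2 + 1 : ℝ) ^ ((1:ℝ)/2) = Kr/a by
        rw [← Real.sqrt_eq_rpow, h2, Real.sqrt_sq (le_of_lt (div_pos hKrpos ha))]]
    rw [h1, h3, hWr]
    push_cast
    ring
  set w : ℂ := omg a (k : ℂ) with hwdef
  have hw0 : w ≠ 0 := by
    rw [h_omg]; exact ofReal_ne_zero.mpr (ne_of_gt hWpos)
  have hs0 : w^2 + 1 ≠ 0 := by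
    rw [h_omg, show ((Wr:ℝ):ℂ)^2 + 1 = (((Wr^2 + 1 : ℝ)):ℂ) by push_cast; ring]
    exact ofReal_ne_zero.mpr (by positivity)
  -- key identities
  have rkR : k * (2 * Wr) = a * (Wr^2 - 1) := by
    rw [hWr]; field_simp; nlinarith [hKr2]
  have rKR : Kr * (2 * Wr) = a * (Wr^2 + 1) := by
    rw [hWr]; field_simp; nlinarith [hKr2]
  have rk : (k:ℂ) * (2 * w) = (a:ℂ) * (w^2 - 1) := by
    rw [h_omg]; exact_mod_cast congrArg (fun t : ℝ => (t : ℂ)) rkR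
  have rK : (Kr:ℂ) * (2 * w) = (a:ℂ) * (w^2 + 1) := by
    rw [h_omg]; exact_mod_cast congrArg (fun t : ℝ => (t : ℂ)) rKR
  have hwinv : 1 / w = ((Kr:ℂ) - (k:ℂ))/(a:ℂ) := by
    rw [h_omg, hWc, one_div_div, div_eq_div_iff hkK0 ha0]
    linear_combination -hKc2
  -- the four exponentials
  set E : ℂ := Complex.exp (Complex.I * (Kr:ℂ) * (b:ℂ)) with hE
  set F : ℂ := Complex.exp (Complex.I * (k:ℂ) * (b:ℂ)) with hF
  set G : ℂ := Complex.exp (-(Complex.I * (k:ℂ) * (b:ℂ))) with hG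
  set Ei : ℂ := Complex.exp (-(Complex.I * (Kr:ℂ) * (b:ℂ))) with hEi
  have hE0 : E ≠ 0 := Complex.exp_ne_zero _
  have hF0 : F ≠ 0 := Complex.exp_ne_zero _
  have r1 : F * G = 1 := by rw [hF, hG, ← Complex.exp_add]; simp
  have r2 : E * Ei = 1 := by rw [hE, hEi, ← Complex.exp_add]; simp
  -- ξ = E²
  have hxiE : xi a b (k:ℂ) = E^2 := by
    unfold xi
    rw [← hwdef, hwinv, h_omg, hWc, hE, sq, ← Complex.exp_add]
    congr 1
    field_simp
    ring
  -- nonvanishing of the denominator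
  have hW1 : Wr ≠ 1 := by
    intro h
    have h4 : k + Kr = a := by
      rw [hWr] at h; field_simp at h; linarith
    have h5 : a * k = 0 := by nlinarith [hKr2]
    rcases mul_eq_zero.mp h5 with h6 | h6
    · linarith
    · exact hk h6
  have habsE : ‖E‖ = 1 := by
    rw [hE, show Complex.I * (Kr:ℂ) * (b:ℂ) = ((Kr*b : ℝ):ℂ) * Complex.I by push_cast; ring]
    exact Complex.norm_exp_ofReal_mul_I _
  have hd0 : xi a b (k:ℂ) - w ^ 4 ≠ 0 := by
    intro h
    rw [sub_eq_zero] at h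
    have habs : (‖E‖)^2 = (‖w‖)^4 := by
      rw [← norm_pow, ← norm_pow, ← hxiE, h]
    rw [habsE, h_omg, Complex.norm_real, Real.norm_eq_abs, abs_of_pos hWpos, one_pow] at habs
    rcases lt_or_gt_of_ne hW1 with hlt | hgt
    · have := pow_lt_one₀ hWpos.le hlt (by norm_num : (4:ℕ) ≠ 0)
      rw [← habs] at this; exact lt_irrefl _ this
    · have := one_lt_pow₀ hgt (by norm_num : (4:ℕ) ≠ 0)
      rw [← habs] at this; exact lt_irrefl _ this
  have hd0' : E^2 - w^4 ≠ 0 := by rw [← hxiE]; exact hd0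
  -- cleared-denominator relations for T and L
  set T : ℂ := Tcoef a b (k:ℂ) with hT
  set L : ℂ := Lcoef a b (k:ℂ) with hL
  have hexpT : Complex.exp (Complex.I * (a:ℂ) * (b:ℂ) / w) = E * G := by
    rw [hE, hG, ← Complex.exp_add]
    congr 1
    rw [div_eq_mul_one_div, hwinv]
    field_simp
    ring
  have rT : T * ((E^2 - w^4)*F) = (1 - w^4)*E := by
    rw [hT]
    unfold Tcoef
    rw [← hwdef, hxiE, hexpT]
    field_simp
    linear_combination (1 - w^4)*r1
  have hexpL : Complex.exp (-Complex.I * (a:ℂ) * (b:ℂ) * (w - 1/w)) = G^2 := by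
    rw [hG, sq, ← Complex.exp_add]
    congr 1
    rw [hwinv, h_omg, hWc]
    field_simp
    ring
  have rL : L * ((E^2 - w^4)*F^2) = w^2*(1 - E^2) := by
    rw [hL]
    unfold Lcoef Rcoef
    rw [← hwdef, hxiE, hexpL]
    field_simp
    linear_combination ((1-E^2)*(F*G+1))*r1
  -- coefficients in the middle region
  set A : ℂ := T * w^2 / (w^2+1) with hA
  set B : ℂ := T / (w^2+1) with hB
  have rA : A * (w^2+1) = T * w^2 := by rw [hA]; field_simp
  have rB : B * (w^2+1) = T := by rw [hB]; field_simp
  have hΔ1 : (E^2-w^4)*F*E*(w^2+1) ≠ 0 :=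
    mul_ne_zero (mul_ne_zero (mul_ne_zero hd0' hF0) hE0) hs0
  have hΔ2 : (E^2-w^4)*F*E*(w^2+1)*(2*w) ≠ 0 :=
    mul_ne_zero hΔ1 (mul_ne_zero two_ne_zero hw0)
  have hΔ4 : (w^2+1)*(2*w) ≠ 0 := mul_ne_zero hs0 (mul_ne_zero two_ne_zero hw0)
  obtain ⟨m1, m2, m3, m4⟩ := match_alg (a:ℂ) w E F G Ei (k:ℂ) (Kr:ℂ) T L A B
    hs0 hΔ1 hΔ2 hΔ4 r1 r2 rT rL rA rB rk rK
  -- the three pieces and their derivatives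
  set Kc : ℂ := ((Kr:ℝ):ℂ) with hKc
  set f₁ : ℝ → ℂ := wv 1 L (k:ℂ) with hf₁
  set f₂ : ℝ → ℂ := wv A B Kc with hf₂
  set f₃ : ℝ → ℂ := wv T 0 (k:ℂ) with hf₃
  set f₁d : ℝ → ℂ := wv (Complex.I*(k:ℂ)*1) (-(Complex.I*(k:ℂ)*L)) (k:ℂ) with hf₁d
  set f₂d : ℝ → ℂ := wv (Complex.I*Kc*A) (-(Complex.I*Kc*B)) Kc with hf₂d
  set f₃d : ℝ → ℂ := wv (Complex.I*(k:ℂ)*T) (-(Complex.I*(k:ℂ)*0)) (k:ℂ) with hf₃d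
  have hder₁ : ∀ x, HasDerivAt f₁ (f₁d x) x := fun x => hasDerivAt_wv _ _ _ x
  have hder₂ : ∀ x, HasDerivAt f₂ (f₂d x) x := fun x => hasDerivAt_wv _ _ _ x
  have hder₃ : ∀ x, HasDerivAt f₃ (f₃d x) x := fun x => hasDerivAt_wv _ _ _ x
  -- exponential values at −b
  have eG : Complex.exp (Complex.I * (k:ℂ) * ((-b : ℝ):ℂ)) = G := by
    rw [hG]; congr 1; push_cast; ring
  have eF : Complex.exp (-(Complex.I * (k:ℂ) * ((-b : ℝ):ℂ))) = F := by
    rw [hF]; congr 1; push_cast; ring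
  have eEi : Complex.exp (Complex.I * Kc * ((-b : ℝ):ℂ)) = Ei := by
    rw [hEi, hKc]; congr 1; push_cast; ring
  have eE : Complex.exp (-(Complex.I * Kc * ((-b : ℝ):ℂ))) = E := by
    rw [hE, hKc]; congr 1; push_cast; ring
  -- matching conditions
  have m1' : f₁ (-b) = f₂ (-b) := by
    rw [hf₁, hf₂]; unfold wv
    rw [eG, eF, eEi, eE]; exact m1
  have m2' : f₁d (-b) = f₂d (-b) := by
    rw [hf₁d, hf₂d]; unfold wv
    rw [eG, eF, eEi, eE]; exact m2
  have m3' : f₂ 0 = f₃ 0 := by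
    rw [hf₂, hf₃]; unfold wv
    push_cast
    simp only [mul_zero, neg_zero, Complex.exp_zero, mul_one]
    simpa using m3
  have m4' : f₂d 0 = f₃d 0 := by
    rw [hf₂d, hf₃d]; unfold wv
    push_cast
    simp only [mul_zero, neg_zero, Complex.exp_zero, mul_one]
    simpa using m4
  -- the inner piecewise and the full ψ
  set inr : ℝ → ℂ := fun y => if y ≤ 0 then f₂ y else f₃ y with hinr
  set inrd : ℝ → ℂ := fun y => if y ≤ 0 then f₂d y else f₃d y with hinrd
  have hder_inr : ∀ x, HasDerivAt inr (inrd x) x := fun x =>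
    pw_hasDerivAt hder₂ hder₃ m3' m4' x
  set ψ : ℝ → ℂ := fun y => if y ≤ -b then f₁ y else inr y with hψdef
  set ψd : ℝ → ℂ := fun y => if y ≤ -b then f₁d y else inrd y with hψd
  have hb0 : (-b : ℝ) ≤ 0 := by linarith
  have mval : f₁ (-b) = inr (-b) := by simp only [hinr, hb0, if_pos]; exact m1'
  have mder : f₁d (-b) = inrd (-b) := by simp only [hinrd, hb0, if_pos]; exact m2'
  have hder_ψ : ∀ x, HasDerivAt ψ (ψd x) x := fun x =>
    pw_hasDerivAt hder₁ hder_inr mval mder x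
  have hderiv_ψ : deriv ψ = ψd := funext fun x => (hder_ψ x).deriv
  refine ⟨hd0, ψ, ?_, ?_, ?_, ?_, ?_⟩
  · -- C¹
    rw [contDiff_one_iff_deriv]
    refine ⟨fun x => (hder_ψ x).differentiableAt, ?_⟩
    rw [hderiv_ψ, hψd]
    have hcont1 : Continuous f₁d := by rw [hf₁d]; exact wv_continuous _ _ _
    have hcont2 : Continuous f₂d := by rw [hf₂d]; exact wv_continuous _ _ _
    have hcont3 : Continuous f₃d := by rw [hf₃d]; exact wv_continuous _ _ _
    have hcontin : Continuous inrd := by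
      rw [hinrd]
      exact Continuous.if_le hcont2 hcont3 continuous_id continuous_const
        (fun x hx => by rw [show x = (0:ℝ) from hx]; exact m4')
    exact Continuous.if_le hcont1 hcontin continuous_id continuous_const
      (fun x hx => by rw [show x = (-b : ℝ) from hx]; exact mder)
  · -- differentiability of the derivative off the junctions
    intro x hx
    simp only [Set.mem_insert_iff, Set.mem_singleton_iff, not_or] at hx
    obtain ⟨hx1, hx2⟩ := hx
    rw [hderiv_ψ]
    rcases lt_trichotomy x (-b) with hc | hc | hc
    · have hev : ψd =ᶠ[nhds x] f₁d := by
        filter_upwards [Iio_mem_nhds hc] with y hy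
        simp only [hψd]
        rw [if_pos (le_of_lt (Set.mem_Iio.mp hy))]
      rw [hf₁d] at hev
      exact ((hasDerivAt_wv _ _ _ x).congr_of_eventuallyEq hev).differentiableAt
    · exact absurd hc hx1
    · rcases lt_trichotomy x 0 with hc2 | hc2 | hc2
      · have hev : ψd =ᶠ[nhds x] f₂d := by
          filter_upwards [Ioo_mem_nhds hc hc2] with y hy
          simp only [hψd, hinrd]
          rw [if_neg (not_le.mpr hy.1), if_pos hy.2.le]
        rw [hf₂d] at hev
        exact ((hasDerivAt_wv _ _ _ x).congr_of_eventuallyEq hev).differentiableAt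
      · exact absurd hc2 hx2
      · have hev : ψd =ᶠ[nhds x] f₃d := by
          filter_upwards [Ioi_mem_nhds hc2] with y hy
          have hy' : (0:ℝ) < y := Set.mem_Ioi.mp hy
          simp only [hψd, hinrd]
          rw [if_neg (not_le.mpr (by linarith)), if_neg (not_le.mpr hy')]
        rw [hf₃d] at hev
        exact ((hasDerivAt_wv _ _ _ x).congr_of_eventuallyEq hev).differentiableAt
  · -- the Schrödinger equation off the junctions
    intro x hx
    simp only [Set.mem_insert_iff, Set.mem_singleton_iff, not_or] at hx
    obtain ⟨hx1, hx2⟩ := hx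
    rw [hderiv_ψ]
    rcases lt_trichotomy x (-b) with hc | hc | hc
    · have hev : ψd =ᶠ[nhds x] f₁d := by
        filter_upwards [Iio_mem_nhds hc] with y hy
        simp only [hψd]
        rw [if_pos (le_of_lt (Set.mem_Iio.mp hy))]
      rw [hf₁d] at hev
      have h2d := (hasDerivAt_wv _ _ _ x).congr_of_eventuallyEq hev
      rw [h2d.deriv]
      have hψx : ψ x = f₁ x := by simp only [hψdef]; rw [if_pos hc.le]
      have hVx : Vblock a b x = 0 := by
        unfold Vblock
        rw [if_neg (by intro hcc; linarith [hcc.1])]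
      rw [hψx, hVx, hf₁]
      unfold wv
      linear_combination (-((k:ℂ)^2*Complex.exp (Complex.I*(k:ℂ)*(x:ℂ)) + (k:ℂ)^2*L*Complex.exp (-(Complex.I*(k:ℂ)*(x:ℂ)))))*Complex.I_sq
    · exact absurd hc hx1
    · rcases lt_trichotomy x 0 with hc2 | hc2 | hc2
      · have hev : ψd =ᶠ[nhds x] f₂d := by
          filter_upwards [Ioo_mem_nhds hc hc2] with y hy
          simp only [hψd, hinrd]
          rw [if_neg (not_le.mpr hy.1), if_pos hy.2.le]
        rw [hf₂d] at hev
        have h2d := (hasDerivAt_wv _ _ _ x).congr_of_eventuallyEq hev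
        rw [h2d.deriv]
        have hψx : ψ x = f₂ x := by
          simp only [hψdef, hinr]
          rw [if_neg (not_le.mpr hc), if_pos hc2.le]
        have hVx : Vblock a b x = -(a:ℂ)^2 := by
          unfold Vblock
          rw [if_pos ⟨hc.le, hc2.le⟩]
        rw [hψx, hVx, hf₂]
        unfold wv
        have hKc2' : Kc^2 = (k:ℂ)^2 + (a:ℂ)^2 := by rw [hKc]; exact hKc2
        linear_combination (-(A*Complex.exp (Complex.I*Kc*(x:ℂ)) + B*Complex.exp (-(Complex.I*Kc*(x:ℂ))))*Kc^2)*Complex.I_sq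
          + (A*Complex.exp (Complex.I*Kc*(x:ℂ)) + B*Complex.exp (-(Complex.I*Kc*(x:ℂ))))*hKc2'
      · exact absurd hc2 hx2
      · have hev : ψd =ᶠ[nhds x] f₃d := by
          filter_upwards [Ioi_mem_nhds hc2] with y hy
          have hy' : (0:ℝ) < y := Set.mem_Ioi.mp hy
          simp only [hψd, hinrd]
          rw [if_neg (not_le.mpr (by linarith)), if_neg (not_le.mpr hy')]
        rw [hf₃d] at hev
        have h2d := (hasDerivAt_wv _ _ _ x).congr_of_eventuallyEq hev
        rw [h2d.deriv]
        have hψx : ψ x = f₃ x := by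
          simp only [hψdef, hinr]
          rw [if_neg (not_le.mpr (by linarith)), if_neg (not_le.mpr hc2)]
        have hVx : Vblock a b x = 0 := by
          unfold Vblock
          rw [if_neg (by intro hcc; linarith [hcc.2])]
        rw [hψx, hVx, hf₃]
        unfold wv
        linear_combination (-(k:ℂ)^2*T*Complex.exp (Complex.I*(k:ℂ)*(x:ℂ)))*Complex.I_sq
  · -- left asymptotics
    intro x hx
    simp only [hψdef]
    rw [if_pos hx, hf₁]
    unfold wv
    rw [show -(Complex.I * (k:ℂ) * (x:ℂ)) = -Complex.I * (k:ℂ) * (x:ℂ) by ring]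
    ring
  · -- right asymptotics
    intro x hx
    simp only [hψdef, hinr]
    rw [if_neg (not_le.mpr (by linarith : (-b:ℝ) < x))]
    rcases eq_or_lt_of_le hx with hx0 | hx0
    · rw [← hx0]
      rw [if_pos le_rfl, m3', hf₃]
      unfold wv
      push_cast
      ring
    · rw [if_neg (not_le.mpr hx0), hf₃]
      unfold wv
      ring
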